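/- Let L be a Latin square of order 4m+2 for some integer m ≥ 0. Then L cannot both possess a transversal (a partial transversal of length 4m+2) and a maximal partial transversal of length 2m+1. -/
import Mathlib


/-- A Latin square of order `n` as a set of triples `(r,c,s)`:
any two coordinates determine the third uniquely. -/
def IsLatinSquare {n : ℕ} (L : Finset (Fin n × Fin n × Fin n)) : Prop :=
  (∀ r c : Fin n, ∃! s : Fin n, (r, c, s) ∈ L) ∧
  (∀ r s : Fin n, ∃! c : Fin n, (r, c, s) ∈ L) ∧
  (∀ c s : Fin n, ∃! r : Fin n, (r, c, s) ∈ L)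

/-- A partial transversal: a subset of the triples with pairwise distinct
rows, columns and symbols. -/
def IsPartialTransversal {α β γ : Type*} (L T : Finset (α × β × γ)) : Prop :=
  T ⊆ L ∧ ∀ t ∈ T, ∀ t' ∈ T, t ≠ t' →
    t.1 ≠ t'.1 ∧ t.2.1 ≠ t'.2.1 ∧ t.2.2 ≠ t'.2.2

/-- A maximal partial transversal: one not properly contained in any
larger partial transversal. -/
def IsMaximalPartialTransversal {α β γ : Type*} (L T : Finset (α × β × γ)) : Prop :=
  IsPartialTransversal L T ∧
    ∀ T' : Finset (α × β × γ), IsPartialTransversal L T' → T ⊆ T' → T' = T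

theorem stmt1 (m : ℕ) (L : Finset (Fin (4*m+2) × Fin (4*m+2) × Fin (4*m+2)))
    (hL : IsLatinSquare L) :
    ¬ ((∃ T, IsPartialTransversal L T ∧ T.card = 4*m+2) ∧
       (∃ T, IsMaximalPartialTransversal L T ∧ T.card = 2*m+1)) := by
  rintro ⟨⟨F, hF, hFcard⟩, ⟨T, ⟨hT, hTmax⟩, hTcard⟩⟩
  obtain ⟨h1, h2, h3⟩ := hL
  -- uniqueness lemmas
  have uS : ∀ r c s s', (r,c,s) ∈ L → (r,c,s') ∈ L → s = s' :=
    fun r c s s' hs hs' => (h1 r c).unique hs hs'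
  have uC : ∀ r c c' s, (r,c,s) ∈ L → (r,c',s) ∈ L → c = c' :=
    fun r c c' s hc hc' => (h2 r s).unique hc hc'
  have uR : ∀ r r' c s, (r,c,s) ∈ L → (r',c,s) ∈ L → r = r' :=
    fun r r' c s hr hr' => (h3 c s).unique hr hr'
  -- choice functions
  choose sym hsym using fun r c => (h1 r c).exists
  choose row hrow using fun c s => (h3 c s).exists
  -- injectivity of coordinate maps on a partial transversal
  have injR : ∀ P : Finset (Fin (4*m+2) × Fin (4*m+2) × Fin (4*m+2)),
      IsPartialTransversal L P → Set.InjOn (fun t : Fin (4*m+2) × Fin (4*m+2) × Fin (4*m+2) => t.1) ↑P := by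
    intro P hP t ht t' ht' h
    by_contra hne
    exact (hP.2 t (Finset.mem_coe.mp ht) t' (Finset.mem_coe.mp ht') hne).1 h
  have injC : ∀ P : Finset (Fin (4*m+2) × Fin (4*m+2) × Fin (4*m+2)),
      IsPartialTransversal L P → Set.InjOn (fun t : Fin (4*m+2) × Fin (4*m+2) × Fin (4*m+2) => t.2.1) ↑P := by
    intro P hP t ht t' ht' h
    by_contra hne
    exact (hP.2 t (Finset.mem_coe.mp ht) t' (Finset.mem_coe.mp ht') hne).2.1 h
  have injS : ∀ P : Finset (Fin (4*m+2) × Fin (4*m+2) × Fin (4*m+2)),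
      IsPartialTransversal L P → Set.InjOn (fun t : Fin (4*m+2) × Fin (4*m+2) × Fin (4*m+2) => t.2.2) ↑P := by
    intro P hP t ht t' ht' h
    by_contra hne
    exact (hP.2 t (Finset.mem_coe.mp ht) t' (Finset.mem_coe.mp ht') hne).2.2 h
  set A : Finset (Fin (4*m+2)) := T.image (fun t => t.1) with hAdef
  set C : Finset (Fin (4*m+2)) := T.image (fun t => t.2.1) with hCdef
  set S : Finset (Fin (4*m+2)) := T.image (fun t => t.2.2) with hSdef
  have hA : A.card = 2*m+1 := by
    rw [hAdef, Finset.card_image_of_injOn (injR T hT), hTcard]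
  have hC : C.card = 2*m+1 := by
    rw [hCdef, Finset.card_image_of_injOn (injC T hT), hTcard]
  have hS : S.card = 2*m+1 := by
    rw [hSdef, Finset.card_image_of_injOn (injS T hT), hTcard]
  have hB : (Aᶜ).card = 2*m+1 := by
    rw [Finset.card_compl, hA, Fintype.card_fin]; omega
  have hD : (Cᶜ).card = 2*m+1 := by
    rw [Finset.card_compl, hC, Fintype.card_fin]; omega
  -- maximality: the symbol in an unused cell is used
  have M : ∀ r c, r ∉ A → c ∉ C → sym r c ∈ S := by
    intro r c hr hc
    by_contra hs
    set t0 : Fin (4*m+2) × Fin (4*m+2) × Fin (4*m+2) := (r, c, sym r c) with ht0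
    have hmemA : ∀ t ∈ T, t.1 ∈ A := fun t ht => Finset.mem_image_of_mem _ ht
    have hmemC : ∀ t ∈ T, t.2.1 ∈ C := fun t ht => Finset.mem_image_of_mem _ ht
    have hmemS : ∀ t ∈ T, t.2.2 ∈ S := fun t ht => Finset.mem_image_of_mem _ ht
    have hne : ∀ t ∈ T, t0.1 ≠ t.1 ∧ t0.2.1 ≠ t.2.1 ∧ t0.2.2 ≠ t.2.2 := by
      intro t ht
      refine ⟨fun h => hr ?_, fun h => hc ?_, fun h => hs ?_⟩
      · rw [show r = t0.1 from rfl, h]; exact hmemA t ht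
      · rw [show c = t0.2.1 from rfl, h]; exact hmemC t ht
      · rw [show sym r c = t0.2.2 from rfl, h]; exact hmemS t ht
    have hPT' : IsPartialTransversal L (insert t0 T) := by
      constructor
      · intro t htm
        rcases Finset.mem_insert.mp htm with h | h
        · rw [h]; exact hsym r c
        · exact hT.1 h
      · intro t htm t' htm' hnet
        rcases Finset.mem_insert.mp htm with h | h <;>
          rcases Finset.mem_insert.mp htm' with h' | h'
        · exact absurd (h.trans h'.symm) hnet
        · rw [h]; exact hne t' h'
        · rw [h']
          obtain ⟨e1, e2, e3⟩ := hne t h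
          exact ⟨e1.symm, e2.symm, e3.symm⟩
        · exact hT.2 t h t' h' hnet
    have heq := hTmax _ hPT' (Finset.subset_insert _ _)
    have : t0 ∈ T := heq ▸ Finset.mem_insert_self t0 T
    exact hr (Finset.mem_image_of_mem _ this)
  -- counting bijection 1: unused rows × unused cols ↦ unused rows × used symbols
  have key1 : Finset.image (fun p : Fin (4*m+2) × Fin (4*m+2) => (p.1, sym p.1 p.2))
      (Aᶜ ×ˢ Cᶜ) = Aᶜ ×ˢ S := by
    apply Finset.eq_of_subset_of_card_le
    · intro q hq
      obtain ⟨p, hp, rfl⟩ := Finset.mem_image.mp hq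
      obtain ⟨hp1, hp2⟩ := Finset.mem_product.mp hp
      exact Finset.mem_product.mpr ⟨hp1, M p.1 p.2 (Finset.mem_compl.mp hp1)
        (Finset.mem_compl.mp hp2)⟩
    · rw [Finset.card_image_of_injOn, Finset.card_product, Finset.card_product, hB, hD, hS]
      intro p hp q hq heq
      simp only [Prod.mk.injEq] at heq
      obtain ⟨e1, e2⟩ := heq
      have : p.2 = q.2 := by
        apply uC p.1 p.2 q.2 (sym p.1 p.2) (hsym p.1 p.2)
        rw [e2, e1]; exact hsym q.1 q.2
      exact Prod.ext e1 this
  -- counting bijection 2: unused rows × unused cols ↦ unused cols × used symbols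
  have key2 : Finset.image (fun p : Fin (4*m+2) × Fin (4*m+2) => (p.2, sym p.1 p.2))
      (Aᶜ ×ˢ Cᶜ) = Cᶜ ×ˢ S := by
    apply Finset.eq_of_subset_of_card_le
    · intro q hq
      obtain ⟨p, hp, rfl⟩ := Finset.mem_image.mp hq
      obtain ⟨hp1, hp2⟩ := Finset.mem_product.mp hp
      exact Finset.mem_product.mpr ⟨hp2, M p.1 p.2 (Finset.mem_compl.mp hp1)
        (Finset.mem_compl.mp hp2)⟩
    · rw [Finset.card_image_of_injOn, Finset.card_product, Finset.card_product, hB, hD, hS]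
      intro p hp q hq heq
      simp only [Prod.mk.injEq] at heq
      obtain ⟨e1, e2⟩ := heq
      have : p.1 = q.1 := by
        apply uR p.1 q.1 p.2 (sym p.1 p.2) (hsym p.1 p.2)
        rw [e2, e1]; exact hsym q.1 q.2
      exact Prod.ext this e1
  -- Q1: in an unused row, a used symbol sits in an unused column
  have Q1 : ∀ r, r ∉ A → ∀ s ∈ S, ∀ c, (r,c,s) ∈ L → c ∉ C := by
    intro r hr s hs c hc
    have hm : (r, s) ∈ Aᶜ ×ˢ S := Finset.mem_product.mpr ⟨Finset.mem_compl.mpr hr, hs⟩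
    rw [← key1] at hm
    obtain ⟨p, hp, heq⟩ := Finset.mem_image.mp hm
    obtain ⟨hp1, hp2⟩ := Finset.mem_product.mp hp
    simp only [Prod.mk.injEq] at heq
    obtain ⟨e1, e2⟩ := heq
    have : c = p.2 := by
      apply uC r c p.2 s hc
      rw [← e2, ← e1]
      exact hsym p.1 p.2
    rw [this]
    exact Finset.mem_compl.mp hp2
  -- Q2: in an unused column, a used symbol sits in an unused row
  have Q2 : ∀ c, c ∉ C → ∀ s ∈ S, ∀ r, (r,c,s) ∈ L → r ∉ A := by
    intro c hc s hs r hr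
    have hm : (c, s) ∈ Cᶜ ×ˢ S := Finset.mem_product.mpr ⟨Finset.mem_compl.mpr hc, hs⟩
    rw [← key2] at hm
    obtain ⟨p, hp, heq⟩ := Finset.mem_image.mp hm
    obtain ⟨hp1, hp2⟩ := Finset.mem_product.mp hp
    simp only [Prod.mk.injEq] at heq
    obtain ⟨e1, e2⟩ := heq
    have : r = p.1 := by
      apply uR r p.1 c s hr
      rw [← e2, ← e1]
      exact hsym p.1 p.2
    rw [this]
    exact Finset.mem_compl.mp hp1
  -- counting bijection 3: used cols × used symbols ↦ used rows × used cols
  have key3 : Finset.image (fun q : Fin (4*m+2) × Fin (4*m+2) => (row q.1 q.2, q.1))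
      (C ×ˢ S) = A ×ˢ C := by
    apply Finset.eq_of_subset_of_card_le
    · intro q hq
      obtain ⟨p, hp, rfl⟩ := Finset.mem_image.mp hq
      obtain ⟨hp1, hp2⟩ := Finset.mem_product.mp hp
      refine Finset.mem_product.mpr ⟨?_, hp1⟩
      by_contra hra
      exact Q1 (row p.1 p.2) hra p.2 hp2 p.1 (hrow p.1 p.2) hp1
    · rw [Finset.card_image_of_injOn, Finset.card_product, Finset.card_product, hA, hC, hS]
      intro p hp q hq heq
      simp only [Prod.mk.injEq] at heq
      obtain ⟨e2, e1⟩ := heq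
      have : p.2 = q.2 := by
        apply uS (row p.1 p.2) p.1 p.2 q.2 (hrow p.1 p.2)
        rw [e2, e1]; exact hrow q.1 q.2
      exact Prod.ext e1 this
  -- Q4: a cell in a used row and used column holds a used symbol
  have Q4 : ∀ r ∈ A, ∀ c ∈ C, ∀ s, (r,c,s) ∈ L → s ∈ S := by
    intro r hr c hc s hs
    have hm : (r, c) ∈ A ×ˢ C := Finset.mem_product.mpr ⟨hr, hc⟩
    rw [← key3] at hm
    obtain ⟨p, hp, heq⟩ := Finset.mem_image.mp hm
    obtain ⟨hp1, hp2⟩ := Finset.mem_product.mp hp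
    simp only [Prod.mk.injEq] at heq
    obtain ⟨e2, e1⟩ := heq
    have : s = p.2 := by
      apply uS r c s p.2 hs
      rw [← e2, ← e1]
      exact hrow p.1 p.2
    rw [this]; exact hp2
  -- coordinate images of the full transversal F cover everything
  have hFr : F.image (fun t => t.1) = Finset.univ := by
    apply Finset.eq_univ_of_card
    rw [Finset.card_image_of_injOn (injR F hF), hFcard, Fintype.card_fin]
  have hFc : F.image (fun t => t.2.1) = Finset.univ := by
    apply Finset.eq_univ_of_card
    rw [Finset.card_image_of_injOn (injC F hF), hFcard, Fintype.card_fin]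
  have hFs : F.image (fun t => t.2.2) = Finset.univ := by
    apply Finset.eq_univ_of_card
    rw [Finset.card_image_of_injOn (injS F hF), hFcard, Fintype.card_fin]
  -- cardinality of filters of F by coordinate membership
  have cardF1 : (F.filter (fun t => t.1 ∈ A)).card = 2*m+1 := by
    have himg : (F.filter (fun t => t.1 ∈ A)).image (fun t => t.1) = A := by
      apply Finset.Subset.antisymm
      · intro r hr
        obtain ⟨t, ht, rfl⟩ := Finset.mem_image.mp hr
        exact (Finset.mem_filter.mp ht).2
      · intro r hr
        have : r ∈ F.image (fun t => t.1) := hFr ▸ Finset.mem_univ r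
        obtain ⟨t, ht, rfl⟩ := Finset.mem_image.mp this
        exact Finset.mem_image_of_mem _ (Finset.mem_filter.mpr ⟨ht, hr⟩)
    calc (F.filter (fun t => t.1 ∈ A)).card
        = ((F.filter (fun t => t.1 ∈ A)).image (fun t => t.1)).card :=
          (Finset.card_image_of_injOn ((injR F hF).mono
            (by exact_mod_cast Finset.filter_subset _ F))).symm
      _ = 2*m+1 := by rw [himg, hA]
  have cardF2 : (F.filter (fun t => t.2.1 ∈ C)).card = 2*m+1 := by
    have himg : (F.filter (fun t => t.2.1 ∈ C)).image (fun t => t.2.1) = C := by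
      apply Finset.Subset.antisymm
      · intro c hc
        obtain ⟨t, ht, rfl⟩ := Finset.mem_image.mp hc
        exact (Finset.mem_filter.mp ht).2
      · intro c hc
        have : c ∈ F.image (fun t => t.2.1) := hFc ▸ Finset.mem_univ c
        obtain ⟨t, ht, rfl⟩ := Finset.mem_image.mp this
        exact Finset.mem_image_of_mem _ (Finset.mem_filter.mpr ⟨ht, hc⟩)
    calc (F.filter (fun t => t.2.1 ∈ C)).card
        = ((F.filter (fun t => t.2.1 ∈ C)).image (fun t => t.2.1)).card :=
          (Finset.card_image_of_injOn ((injC F hF).mono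
            (by exact_mod_cast Finset.filter_subset _ F))).symm
      _ = 2*m+1 := by rw [himg, hC]
  have cardF3 : (F.filter (fun t => t.2.2 ∈ S)).card = 2*m+1 := by
    have himg : (F.filter (fun t => t.2.2 ∈ S)).image (fun t => t.2.2) = S := by
      apply Finset.Subset.antisymm
      · intro s hs
        obtain ⟨t, ht, rfl⟩ := Finset.mem_image.mp hs
        exact (Finset.mem_filter.mp ht).2
      · intro s hs
        have : s ∈ F.image (fun t => t.2.2) := hFs ▸ Finset.mem_univ s
        obtain ⟨t, ht, rfl⟩ := Finset.mem_image.mp this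
        exact Finset.mem_image_of_mem _ (Finset.mem_filter.mpr ⟨ht, hs⟩)
    calc (F.filter (fun t => t.2.2 ∈ S)).card
        = ((F.filter (fun t => t.2.2 ∈ S)).image (fun t => t.2.2)).card :=
          (Finset.card_image_of_injOn ((injS F hF).mono
            (by exact_mod_cast Finset.filter_subset _ F))).symm
      _ = 2*m+1 := by rw [himg, hS]
  -- quadrant counts
  have e1 : (F.filter (fun t => t.1 ∈ A ∧ t.2.1 ∈ C)).card
      + (F.filter (fun t => t.1 ∈ A ∧ t.2.1 ∉ C)).card = 2*m+1 := by
    have h := Finset.card_filter_add_card_filter_not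
      (s := F.filter (fun t => t.1 ∈ A)) (p := fun t => t.2.1 ∈ C)
    rw [Finset.filter_filter, Finset.filter_filter, cardF1] at h
    exact h
  have e2 : (F.filter (fun t => t.1 ∈ A ∧ t.2.1 ∈ C)).card
      + (F.filter (fun t => t.1 ∉ A ∧ t.2.1 ∈ C)).card = 2*m+1 := by
    have h := Finset.card_filter_add_card_filter_not
      (s := F.filter (fun t => t.2.1 ∈ C)) (p := fun t => t.1 ∈ A)
    rw [Finset.filter_filter, Finset.filter_filter, cardF2] at h
    have c1 : F.filter (fun t => t.2.1 ∈ C ∧ t.1 ∈ A)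
        = F.filter (fun t => t.1 ∈ A ∧ t.2.1 ∈ C) :=
      Finset.filter_congr fun t _ => and_comm
    have c2 : F.filter (fun t => t.2.1 ∈ C ∧ ¬ t.1 ∈ A)
        = F.filter (fun t => t.1 ∉ A ∧ t.2.1 ∈ C) :=
      Finset.filter_congr fun t _ => and_comm
    rw [c1, c2] at h
    exact h
  have e3 : (F.filter (fun t => t.1 ∉ A ∧ t.2.1 ∈ C)).card
      + (F.filter (fun t => t.1 ∉ A ∧ t.2.1 ∉ C)).card = 2*m+1 := by
    have hcompl : (F.filter (fun t => ¬ t.1 ∈ A)).card = 2*m+1 := by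
      have h := Finset.card_filter_add_card_filter_not
        (s := F) (p := fun t => t.1 ∈ A)
      rw [cardF1, hFcard] at h
      omega
    have h := Finset.card_filter_add_card_filter_not
      (s := F.filter (fun t => ¬ t.1 ∈ A)) (p := fun t => t.2.1 ∈ C)
    rw [Finset.filter_filter, Finset.filter_filter, hcompl] at h
    exact h
  have e4 : (F.filter (fun t => t.1 ∈ A ∧ t.2.1 ∈ C)).card
      + (F.filter (fun t => t.1 ∉ A ∧ t.2.1 ∉ C)).card = 2*m+1 := by
    have s1 : F.filter (fun t => t.2.2 ∈ S ∧ t.1 ∈ A) =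
        F.filter (fun t => t.1 ∈ A ∧ t.2.1 ∈ C) := by
      apply Finset.filter_congr
      rintro ⟨r, c', s⟩ ht
      have hmem : (r, c', s) ∈ L := hF.1 ht
      constructor
      · rintro ⟨hs, hr⟩
        refine ⟨hr, ?_⟩
        by_contra hcc
        exact Q2 c' hcc s hs r hmem hr
      · rintro ⟨hr, hc⟩
        exact ⟨Q4 r hr c' hc s hmem, hr⟩
    have s2 : F.filter (fun t => t.2.2 ∈ S ∧ ¬ t.1 ∈ A) =
        F.filter (fun t => t.1 ∉ A ∧ t.2.1 ∉ C) := by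
      apply Finset.filter_congr
      rintro ⟨r, c', s⟩ ht
      have hmem : (r, c', s) ∈ L := hF.1 ht
      constructor
      · rintro ⟨hs, hr⟩
        exact ⟨hr, Q1 r hr s hs c' hmem⟩
      · rintro ⟨hr, hc⟩
        have hsymeq : s = sym r c' := uS r c' s (sym r c') hmem (hsym r c')
        exact ⟨hsymeq ▸ M r c' hr hc, hr⟩
    have h := Finset.card_filter_add_card_filter_not
      (s := F.filter (fun t => t.2.2 ∈ S)) (p := fun t => t.1 ∈ A)
    rw [Finset.filter_filter, Finset.filter_filter, s1, s2, cardF3] at h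
    exact h
  omega
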